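/- Let A = (a^i_j) be a matrix over k with rows and columns indexed by I(n,r). Then A commutes with the matrix I_n^{⊗(α-1)} ⊗ J_n ⊗ I_n^{⊗(r-α)} for every α = 1,…,r if and only if for each place α = 1,…,r and all p = i_1⋯i_{α-1}i_{α+1}⋯i_r and q = j_1⋯j_{α-1}j_{α+1}⋯j_r in I(n,r-1) there is a scalar b^p_q(α) ∈ k such that Σ_{i=1}^n a^{i_1⋯i_{α-1} i i_{α+1}⋯i_r}_{j_1⋯j_{α-1} j j_{α+1}⋯j_r} = b^p_q(α) for every j = 1,…,n, and Σ_{j=1}^n a^{i_1⋯i_{α-1} i i_{α+1}⋯i_r}_{j_1⋯j_{α-1} j j_{α+1}⋯j_r} = b^p_q(α) for every i = 1,…,n. -/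
import Mathlib


open Finset

/-- The matrix `I_n^{⊗(α-1)} ⊗ J_n ⊗ I_n^{⊗(r-α)}` of the partition-algebra
generator `p_α` acting on `(k^n)^{⊗r}`: its `(i,j)`-entry is the product over all
places `β` of the `(i β, j β)`-entry of the `β`-th Kronecker factor. -/
def pMat (k : Type*) [CommRing k] (n r : ℕ) (α : Fin r) :
    Matrix (Fin r → Fin n) (Fin r → Fin n) k :=
  Matrix.of fun i j => ∏ β : Fin r, if β = α then 1 else if i β = j β then 1 else 0

/-- A matrix `A` indexed by `I(n,r)` commutes with `I_n^{⊗(α-1)} ⊗ J_n ⊗ I_n^{⊗(r-α)}`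
for every place `α` iff for each `α` and all `p, q ∈ I(n,r-1)` there is a scalar `b`
equal to all the corresponding row and column `α`-slice sums of `A`.
(Here the positive integer r of the statement is represented as `r+1`.) -/
lemma pMat_apply {k : Type*} [CommRing k] {n r : ℕ} (α : Fin (r+1))
    (i j : Fin (r+1) → Fin n) :
    pMat k n (r+1) α i j = if α.removeNth i = α.removeNth j then 1 else 0 := by
  rw [pMat, Matrix.of_apply, Fin.prod_univ_succAbove _ α]
  have h : ∀ γ : Fin r, (if α.succAbove γ = α then (1:k) else
      if i (α.succAbove γ) = j (α.succAbove γ) then 1 else 0)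
      = if α.removeNth i γ = α.removeNth j γ then 1 else 0 := by
    intro γ; rw [if_neg (Fin.succAbove_ne α γ)]; rfl
  simp_rw [h, Fintype.prod_boole, funext_iff]
  simp

lemma mul_pMat {k : Type*} [CommRing k] {n r : ℕ} (α : Fin (r+1))
    (A : Matrix (Fin (r+1) → Fin n) (Fin (r+1) → Fin n) k)
    (i j : Fin (r+1) → Fin n) :
    (A * pMat k n (r+1) α) i j
      = ∑ y : Fin n, A i (α.insertNth y (α.removeNth j)) := by
  rw [Matrix.mul_apply,
    ← Equiv.sum_comp (Fin.insertNthEquiv (fun _ => Fin n) α), Fintype.sum_prod_type]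
  simp only [Fin.insertNthEquiv, Equiv.coe_fn_mk, pMat_apply, Fin.removeNth_insertNth,
    Fin.insertNth_removeNth, mul_ite, mul_one, mul_zero]
  rw [Finset.sum_comm]
  simp [Finset.sum_ite_eq' Finset.univ (α.removeNth j)]

lemma pMat_mul {k : Type*} [CommRing k] {n r : ℕ} (α : Fin (r+1))
    (A : Matrix (Fin (r+1) → Fin n) (Fin (r+1) → Fin n) k)
    (i j : Fin (r+1) → Fin n) :
    (pMat k n (r+1) α * A) i j
      = ∑ x : Fin n, A (α.insertNth x (α.removeNth i)) j := by
  rw [Matrix.mul_apply,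
    ← Equiv.sum_comp (Fin.insertNthEquiv (fun _ => Fin n) α), Fintype.sum_prod_type]
  simp only [Fin.insertNthEquiv, Equiv.coe_fn_mk, pMat_apply, Fin.removeNth_insertNth,
    Fin.insertNth_removeNth, ite_mul, one_mul, zero_mul]
  rw [Finset.sum_comm]
  simp [Finset.sum_ite_eq Finset.univ (α.removeNth i)]

theorem stmt_1 {k : Type*} [CommRing k] {n r : ℕ} (hn : 0 < n)
    (A : Matrix (Fin (r+1) → Fin n) (Fin (r+1) → Fin n) k) :
    (∀ α : Fin (r+1), A * pMat k n (r+1) α = pMat k n (r+1) α * A) ↔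
      (∀ (α : Fin (r+1)) (p q : Fin r → Fin n), ∃ b : k,
        (∀ y : Fin n, (∑ x : Fin n, A (α.insertNth x p) (α.insertNth y q)) = b) ∧
        (∀ x : Fin n, (∑ y : Fin n, A (α.insertNth x p) (α.insertNth y q)) = b)) := by
  have key : ∀ α, (A * pMat k n (r+1) α = pMat k n (r+1) α * A) ↔
      ∀ (p q : Fin r → Fin n) (x y : Fin n),
        (∑ y' : Fin n, A (α.insertNth x p) (α.insertNth y' q))
          = ∑ x' : Fin n, A (α.insertNth x' p) (α.insertNth y q) := by
    intro α
    constructor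
    · intro h p q x y
      have := congrFun (congrFun h (α.insertNth x p)) (α.insertNth y q)
      rwa [mul_pMat, pMat_mul, Fin.removeNth_insertNth, Fin.removeNth_insertNth] at this
    · intro h
      ext i j
      rw [mul_pMat, pMat_mul]
      have := h (α.removeNth i) (α.removeNth j) (i α) (j α)
      rwa [Fin.insertNth_self_removeNth, Fin.insertNth_self_removeNth] at this
  simp_rw [key]
  refine forall_congr' fun α => ?_
  constructor
  · intro h p q
    set x0 : Fin n := ⟨0, hn⟩
    refine ⟨∑ y' : Fin n, A (α.insertNth x0 p) (α.insertNth y' q), ?_, ?_⟩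
    · intro y; exact (h p q x0 y).symm
    · intro x; rw [h p q x x0, ← h p q x0 x0]
  · intro h p q x y
    obtain ⟨b, hb1, hb2⟩ := h p q
    rw [hb2 x, hb1 y]
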